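/- Let E be a real Banach space and let B : E × E → E be a continuous bilinear map with ‖B(x, y)‖ ≤ c·‖x‖·‖y‖ for all x, y, where c > 0. Then for every φ ∈ E with ‖φ‖ ≤ 1/(8c) there exists a unique w ∈ E with ‖w‖ ≤ 1/(8c) satisfying w = −B(φ + w, φ + w); moreover this w obeys ‖w‖ ≤ 3c·‖φ‖², and if φ' is another element with ‖φ'‖ ≤ 1/(8c) and w' is the corresponding solution, then ‖w − w'‖ ≤ 3c·(‖φ‖ + ‖φ'‖)·‖φ − φ'‖. -/

import Mathlib

set_option maxHeartbeats 1000000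

/-- Abstract quadratic fixed-point lemma (Lemma IV.3.3): for a continuous bilinear map `B`
on a Banach space with `‖B(x,y)‖ ≤ c‖x‖‖y‖`, every `φ` with `‖φ‖ ≤ 1/(8c)` admits a unique
`w` with `‖w‖ ≤ 1/(8c)` and `w = −B(φ+w, φ+w)`; moreover `‖w‖ ≤ 3c‖φ‖²` and the solution
map is Lipschitz: `‖w − w'‖ ≤ 3c(‖φ‖+‖φ'‖)‖φ − φ'‖`. -/
theorem quadratic_fixed_point {E : Type*} [NormedAddCommGroup E] [NormedSpace ℝ E]
    [CompleteSpace E] (c : ℝ) (hc : 0 < c) (B : E →L[ℝ] E →L[ℝ] E)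
    (hB : ∀ x y : E, ‖B x y‖ ≤ c * ‖x‖ * ‖y‖) :
    ∀ φ : E, ‖φ‖ ≤ 1 / (8 * c) →
      (∃! w : E, ‖w‖ ≤ 1 / (8 * c) ∧ w = -B (φ + w) (φ + w)) ∧
      ∀ w : E, ‖w‖ ≤ 1 / (8 * c) → w = -B (φ + w) (φ + w) →
        ‖w‖ ≤ 3 * c * ‖φ‖ ^ 2 ∧
        ∀ φ' w' : E, ‖φ'‖ ≤ 1 / (8 * c) → ‖w'‖ ≤ 1 / (8 * c) →
          w' = -B (φ' + w') (φ' + w') →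
          ‖w - w'‖ ≤ 3 * c * (‖φ‖ + ‖φ'‖) * ‖φ - φ'‖ := by
  have hr : (0:ℝ) < 1 / (8 * c) := by positivity
  set r : ℝ := 1 / (8 * c) with hrdef
  have hcr : c * r = 1 / 8 := by rw [hrdef]; field_simp
  -- key algebraic estimate
  have key : ∀ a b : E, ‖B a a - B b b‖ ≤ c * (‖a‖ + ‖b‖) * ‖a - b‖ := by
    intro a b
    have h1 : B a a - B b b = B a (a - b) + B (a - b) b := by
      simp only [map_sub, ContinuousLinearMap.sub_apply]
      abel
    rw [h1]
    calc ‖B a (a - b) + B (a - b) b‖ ≤ ‖B a (a - b)‖ + ‖B (a - b) b‖ := norm_add_le _ _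
      _ ≤ c * ‖a‖ * ‖a - b‖ + c * ‖a - b‖ * ‖b‖ := add_le_add (hB _ _) (hB _ _)
      _ = c * (‖a‖ + ‖b‖) * ‖a - b‖ := by ring
  -- the quadratic bound, for any solution
  have hbound : ∀ φ w : E, ‖φ‖ ≤ r → ‖w‖ ≤ r → w = -B (φ + w) (φ + w) →
      ‖w‖ ≤ 3 * c * ‖φ‖ ^ 2 := by
    intro φ w hφ hw heq
    have h1 : ‖w‖ ≤ c * (‖φ‖ + ‖w‖) * (‖φ‖ + ‖w‖) := by
      calc ‖w‖ = ‖B (φ + w) (φ + w)‖ := by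
            conv_lhs => rw [heq]
            exact norm_neg _
        _ ≤ c * ‖φ + w‖ * ‖φ + w‖ := hB _ _
        _ ≤ c * (‖φ‖ + ‖w‖) * (‖φ‖ + ‖w‖) := by
            gcongr <;> first | exact norm_add_le φ w | positivity
    have hcφ : c * ‖φ‖ ≤ 1 / 8 := by
      calc c * ‖φ‖ ≤ c * r := mul_le_mul_of_nonneg_left hφ hc.le
        _ = 1 / 8 := hcr
    have hcw : c * ‖w‖ ≤ 1 / 8 := by
      calc c * ‖w‖ ≤ c * r := mul_le_mul_of_nonneg_left hw hc.le
        _ = 1 / 8 := hcr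
    have h2 : c * ‖φ‖ * ‖w‖ ≤ (1/8) * ‖w‖ :=
      mul_le_mul_of_nonneg_right hcφ (norm_nonneg w)
    have h3 : c * ‖w‖ * ‖w‖ ≤ (1/8) * ‖w‖ :=
      mul_le_mul_of_nonneg_right hcw (norm_nonneg w)
    nlinarith [norm_nonneg w, norm_nonneg φ, mul_nonneg (mul_nonneg hc.le (norm_nonneg φ)) (norm_nonneg φ)]
  intro φ hφ
  -- the map sends the ball to itself
  have hmap : ∀ w : E, ‖w‖ ≤ r → ‖-B (φ + w) (φ + w)‖ ≤ r := by
    intro w hw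
    have h1 : ‖φ + w‖ ≤ 2 * r := by
      have := norm_add_le φ w; linarith
    calc ‖-B (φ + w) (φ + w)‖ = ‖B (φ + w) (φ + w)‖ := norm_neg _
      _ ≤ c * ‖φ + w‖ * ‖φ + w‖ := hB _ _
      _ ≤ c * (2 * r) * (2 * r) := by gcongr <;> first | exact h1 | positivity
      _ = 4 * (c * r) * r := by ring
      _ = r / 2 := by rw [hcr]; ring
      _ ≤ r := by linarith
  -- existence via contraction on the closed ball
  haveI : Nonempty (Metric.closedBall (0:E) r) :=
    ⟨⟨0, by simp [hr.le]⟩⟩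
  haveI : CompleteSpace (Metric.closedBall (0:E) r) :=
    (Metric.isClosed_closedBall (x := (0:E)) (ε := r)).completeSpace_coe
  let f : Metric.closedBall (0:E) r → Metric.closedBall (0:E) r :=
    fun w => ⟨-B (φ + w.1) (φ + w.1),
      mem_closedBall_zero_iff.mpr (hmap w.1 (mem_closedBall_zero_iff.mp w.2))⟩
  have hhalf : ∀ x y : E, ‖x‖ ≤ r → ‖y‖ ≤ r → c * (‖φ + x‖ + ‖φ + y‖) ≤ 1 / 2 := by
    intro x y hx hy
    have h1 := norm_add_le φ x
    have h2 := norm_add_le φ y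
    have hsum : ‖φ + x‖ + ‖φ + y‖ ≤ 4 * r := by linarith
    calc c * (‖φ + x‖ + ‖φ + y‖) ≤ c * (4 * r) := mul_le_mul_of_nonneg_left hsum hc.le
      _ = 4 * (c * r) := by ring
      _ = 1 / 2 := by rw [hcr]; norm_num
  have hcontr : ContractingWith (1/2 : NNReal) f := by
    constructor
    · first
      | exact one_half_lt_one
      | · rw [← NNReal.coe_lt_coe]; norm_num
    · apply LipschitzWith.of_dist_le_mul
      intro x y
      have hx : ‖x.1‖ ≤ r := mem_closedBall_zero_iff.mp x.2
      have hy : ‖y.1‖ ≤ r := mem_closedBall_zero_iff.mp y.2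
      have hd : dist (f x) (f y) = ‖B (φ + y.1) (φ + y.1) - B (φ + x.1) (φ + x.1)‖ := by
        rw [Subtype.dist_eq, dist_eq_norm]
        show ‖-B (φ + x.1) (φ + x.1) - -B (φ + y.1) (φ + y.1)‖ = _
        congr 1; abel
      have hdxy : dist x y = ‖y.1 - x.1‖ := by
        rw [Subtype.dist_eq, dist_eq_norm, norm_sub_rev]
      have h2 := key (φ + y.1) (φ + x.1)
      have h3 : (φ + y.1) - (φ + x.1) = y.1 - x.1 := by abel
      rw [h3] at h2
      have h4 := hhalf y.1 x.1 hy hx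
      have hcoe : ((1/2 : NNReal) : ℝ) = 1/2 := by norm_num
      rw [hd, hdxy, hcoe]
      calc ‖B (φ + y.1) (φ + y.1) - B (φ + x.1) (φ + x.1)‖
          ≤ c * (‖φ + y.1‖ + ‖φ + x.1‖) * ‖y.1 - x.1‖ := h2
        _ ≤ (1/2) * ‖y.1 - x.1‖ := mul_le_mul_of_nonneg_right h4 (norm_nonneg _)
  obtain ⟨wf, hfix, -, -⟩ := hcontr.exists_fixedPoint
    (⟨0, by simp [hr.le]⟩ : Metric.closedBall (0:E) r) (edist_ne_top _ _)
  have hwfix : (-B (φ + wf.1) (φ + wf.1) : E) = wf.1 := congrArg Subtype.val hfix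
  have hwnorm : ‖wf.1‖ ≤ r := mem_closedBall_zero_iff.mp wf.2
  -- uniqueness
  have huniq : ∀ y : E, ‖y‖ ≤ r → y = -B (φ + y) (φ + y) → y = wf.1 := by
    intro y hy heq
    have h1 : y - wf.1 = B (φ + wf.1) (φ + wf.1) - B (φ + y) (φ + y) := by
      have e : (-B (φ + y) (φ + y)) - (-B (φ + wf.1) (φ + wf.1))
          = B (φ + wf.1) (φ + wf.1) - B (φ + y) (φ + y) := by abel
      rw [← e, ← heq, hwfix]
    have h2 := key (φ + wf.1) (φ + y)
    have h3 : (φ + wf.1) - (φ + y) = wf.1 - y := by abel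
    rw [h3] at h2
    have hd : ‖y - wf.1‖ ≤ c * (‖φ + wf.1‖ + ‖φ + y‖) * ‖y - wf.1‖ := by
      conv_lhs => rw [h1]
      calc ‖B (φ + wf.1) (φ + wf.1) - B (φ + y) (φ + y)‖
          ≤ c * (‖φ + wf.1‖ + ‖φ + y‖) * ‖wf.1 - y‖ := h2
        _ = c * (‖φ + wf.1‖ + ‖φ + y‖) * ‖y - wf.1‖ := by rw [norm_sub_rev]
    have h4 := hhalf wf.1 y hwnorm hy
    have h5 : c * (‖φ + wf.1‖ + ‖φ + y‖) * ‖y - wf.1‖ ≤ (1/2) * ‖y - wf.1‖ :=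
      mul_le_mul_of_nonneg_right h4 (norm_nonneg _)
    have h6 : ‖y - wf.1‖ ≤ 0 := by linarith
    have h7 : y - wf.1 = 0 := by rwa [← norm_le_zero_iff]
    exact sub_eq_zero.mp h7
  constructor
  · exact ⟨wf.1, ⟨hwnorm, hwfix.symm⟩, fun y hy => huniq y hy.1 hy.2⟩
  · intro w hw heq
    refine ⟨hbound φ w hφ hw heq, ?_⟩
    intro φ' w' hφ' hw' heq'
    have hb := hbound φ w hφ hw heq
    have hb' := hbound φ' w' hφ' hw' heq'
    have hcφ : c * ‖φ‖ ≤ 1 / 8 := by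
      calc c * ‖φ‖ ≤ c * r := mul_le_mul_of_nonneg_left hφ hc.le
        _ = 1 / 8 := hcr
    have hcφ' : c * ‖φ'‖ ≤ 1 / 8 := by
      calc c * ‖φ'‖ ≤ c * r := mul_le_mul_of_nonneg_left hφ' hc.le
        _ = 1 / 8 := hcr
    -- refined bounds ‖w‖ ≤ (3/8)‖φ‖
    have hw38 : ‖w‖ ≤ (3/8) * ‖φ‖ := by
      have h1 : c * ‖φ‖ * ‖φ‖ ≤ (1/8) * ‖φ‖ :=
        mul_le_mul_of_nonneg_right hcφ (norm_nonneg φ)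
      nlinarith [hb]
    have hw38' : ‖w'‖ ≤ (3/8) * ‖φ'‖ := by
      have h1 : c * ‖φ'‖ * ‖φ'‖ ≤ (1/8) * ‖φ'‖ :=
        mul_le_mul_of_nonneg_right hcφ' (norm_nonneg φ')
      nlinarith [hb']
    have hA : ‖φ + w‖ ≤ (11/8) * ‖φ‖ := by
      have := norm_add_le φ w; linarith
    have hA' : ‖φ' + w'‖ ≤ (11/8) * ‖φ'‖ := by
      have := norm_add_le φ' w'; linarith
    -- main difference estimate
    have hd : ‖w - w'‖ ≤ c * (‖φ' + w'‖ + ‖φ + w‖) * (‖φ - φ'‖ + ‖w - w'‖) := by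
      have h1 : w - w' = B (φ' + w') (φ' + w') - B (φ + w) (φ + w) := by
        have e : (-B (φ + w) (φ + w)) - (-B (φ' + w') (φ' + w'))
            = B (φ' + w') (φ' + w') - B (φ + w) (φ + w) := by abel
        rw [← e, ← heq, ← heq']
      have h2 := key (φ' + w') (φ + w)
      have h3 : ‖(φ' + w') - (φ + w)‖ ≤ ‖φ - φ'‖ + ‖w - w'‖ := by
        have h4 : (φ' + w') - (φ + w) = -((φ - φ') + (w - w')) := by abel
        rw [h4, norm_neg]
        exact norm_add_le _ _
      conv_lhs => rw [h1]
      calc ‖B (φ' + w') (φ' + w') - B (φ + w) (φ + w)‖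
          ≤ c * (‖φ' + w'‖ + ‖φ + w‖) * ‖(φ' + w') - (φ + w)‖ := h2
        _ ≤ c * (‖φ' + w'‖ + ‖φ + w‖) * (‖φ - φ'‖ + ‖w - w'‖) := by
            apply mul_le_mul_of_nonneg_left h3
            positivity
    have hhalf2 : c * (‖φ' + w'‖ + ‖φ + w‖) ≤ 1 / 2 := by
      have h1 := norm_add_le φ' w'
      have h2 := norm_add_le φ w
      have hsum : ‖φ' + w'‖ + ‖φ + w‖ ≤ 4 * r := by linarith
      calc c * (‖φ' + w'‖ + ‖φ + w‖) ≤ c * (4 * r) := mul_le_mul_of_nonneg_left hsum hc.le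
        _ = 4 * (c * r) := by ring
        _ = 1 / 2 := by rw [hcr]; norm_num
    have hSle : ‖φ' + w'‖ + ‖φ + w‖ ≤ (11/8) * (‖φ‖ + ‖φ'‖) := by linarith
    -- d ≤ S*q + S*d with S*d ≤ d/2
    have hq : (0:ℝ) ≤ ‖φ - φ'‖ := norm_nonneg _
    have hdn : (0:ℝ) ≤ ‖w - w'‖ := norm_nonneg _
    have hSd : c * (‖φ' + w'‖ + ‖φ + w‖) * ‖w - w'‖ ≤ (1/2) * ‖w - w'‖ :=
      mul_le_mul_of_nonneg_right hhalf2 hdn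
    have hSq : c * (‖φ' + w'‖ + ‖φ + w‖) * ‖φ - φ'‖
        ≤ c * ((11/8) * (‖φ‖ + ‖φ'‖)) * ‖φ - φ'‖ := by
      apply mul_le_mul_of_nonneg_right _ hq
      exact mul_le_mul_of_nonneg_left hSle hc.le
    rw [mul_add] at hd
    have hfin : ‖w - w'‖ ≤ 2 * (c * ((11/8) * (‖φ‖ + ‖φ'‖)) * ‖φ - φ'‖) := by
      linarith
    have hpos : (0:ℝ) ≤ c * (‖φ‖ + ‖φ'‖) * ‖φ - φ'‖ := by positivity
    calc ‖w - w'‖ ≤ 2 * (c * ((11/8) * (‖φ‖ + ‖φ'‖)) * ‖φ - φ'‖) := hfin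
      _ = (11/4) * (c * (‖φ‖ + ‖φ'‖) * ‖φ - φ'‖) := by ring
      _ ≤ 3 * (c * (‖φ‖ + ‖φ'‖) * ‖φ - φ'‖) := by linarith
      _ = 3 * c * (‖φ‖ + ‖φ'‖) * ‖φ - φ'‖ := by ring
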